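/- Let r be a positive integer with r ≡ 3 (mod 4) and let ω := ι(e₁)·ι(e₂)⋯ι(e_r) be the volume element of the Clifford algebra Cl(Q_r) of the quadratic form Q(v) = −‖v‖² on ℝ^r. Then there exists a unital ℝ-algebra homomorphism F : Cl(Q_r) → Cl(Q_r) such that F(ι(v)) = ω·ι(v) for all v ∈ ℝ^r, and the image of F is contained in the even subalgebra Cl⁰(Q_r). (Consequently every representation of the even Clifford algebra Cl⁰(Q_r) extends along F to a representation of the full Clifford algebra Cl(Q_r) when r ≡ 3 mod 4.) -/

import Mathlib

open CliffordAlgebra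

/-- The quadratic form `Q(v) = -‖v‖²` on the Euclidean space `ℝ^r`. -/
noncomputable def Qr (r : ℕ) : QuadraticForm ℝ (EuclideanSpace ℝ (Fin r)) :=
  -LinearMap.BilinMap.toQuadraticMap (innerₗ (EuclideanSpace ℝ (Fin r)))

/-- The standard orthonormal basis vectors of `ℝ^r`. -/
noncomputable def stdB (r : ℕ) (i : Fin r) : EuclideanSpace ℝ (Fin r) :=
  EuclideanSpace.single i 1

/-- The volume element `ω = ι(e₁)·ι(e₂)⋯ι(e_r)` of `Cl(Q_r)`. -/
noncomputable def vol (r : ℕ) : CliffordAlgebra (Qr r) :=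
  ((List.finRange r).map fun i => ι (Qr r) (stdB r i)).prod

section Aux
variable {r : ℕ}

variable {r : ℕ}

private lemma Qr_stdB (i : Fin r) : Qr r (stdB r i) = -1 := by
  simp [Qr, stdB, LinearMap.BilinMap.toQuadraticMap_apply, EuclideanSpace.inner_single_left]

private lemma ortho {i j : Fin r} (h : i ≠ j) : (Qr r).IsOrtho (stdB r i) (stdB r j) := by
  rw [QuadraticMap.isOrtho_def]
  simp [Qr, stdB, LinearMap.BilinMap.toQuadraticMap_apply, inner_add_add_self,
    EuclideanSpace.inner_single_left, EuclideanSpace.single_apply, h, h.symm]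

private lemma iota_sq (i : Fin r) :
    ι (Qr r) (stdB r i) * ι (Qr r) (stdB r i) = -1 := by
  rw [ι_sq_scalar, Qr_stdB, map_neg, map_one]

private noncomputable def P (r : ℕ) (l : List (Fin r)) : CliffordAlgebra (Qr r) :=
  (l.map fun i => ι (Qr r) (stdB r i)).prod

private lemma P_cons (a : Fin r) (l : List (Fin r)) :
    P r (a :: l) = ι (Qr r) (stdB r a) * P r l := by
  simp [P]

private lemma key (j a : Fin r) :
    ι (Qr r) (stdB r j) * ι (Qr r) (stdB r a)
      = (if a = j then (1:ℝ) else -1) • (ι (Qr r) (stdB r a) * ι (Qr r) (stdB r j)) := by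
  by_cases h : a = j
  · simp [h]
  · rw [if_neg h, neg_one_smul, ι_mul_ι_comm_of_isOrtho (ortho (Ne.symm h))]

private lemma comm_basis (j : Fin r) (l : List (Fin r)) :
    ι (Qr r) (stdB r j) * P r l
      = ((l.map fun i => if i = j then (1:ℝ) else -1).prod) • (P r l * ι (Qr r) (stdB r j)) := by
  induction l with
  | nil => simp [P]
  | cons a l ih =>
    rw [P_cons, ← mul_assoc, key j a, smul_mul_assoc, mul_assoc, ih, mul_smul_comm,
      smul_smul, List.map_cons, List.prod_cons, ← mul_assoc]

private lemma sq_P (l : List (Fin r)) (hl : l.Nodup) :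
    P r l * P r l = ((-1:ℝ) ^ (l.length * (l.length + 1) / 2)) • 1 := by
  induction l with
  | nil => simp [P]
  | cons a l ih =>
    obtain ⟨ha, hl'⟩ := List.nodup_cons.mp hl
    have hc : ((l.map fun i => if i = a then (1:ℝ) else -1).prod) = (-1:ℝ) ^ l.length := by
      rw [List.map_congr_left (fun i hi => if_neg (by rintro rfl; exact ha hi))]
      simp [List.map_const']
    have hcomm := comm_basis a l
    rw [hc] at hcomm
    have hXA : P r l * ι (Qr r) (stdB r a) = ((-1:ℝ) ^ l.length) • (ι (Qr r) (stdB r a) * P r l) := by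
      rw [hcomm, smul_smul, ← pow_add, ← two_mul, pow_mul, neg_one_sq, one_pow, one_smul]
    calc P r (a :: l) * P r (a :: l)
        = ι (Qr r) (stdB r a) * (P r l * ι (Qr r) (stdB r a)) * P r l := by
          rw [P_cons]; simp only [mul_assoc]
      _ = ((-1:ℝ) ^ l.length) • (ι (Qr r) (stdB r a) * (ι (Qr r) (stdB r a) * P r l) * P r l) := by
          rw [hXA, mul_smul_comm, smul_mul_assoc]
      _ = ((-1:ℝ) ^ l.length) • ((ι (Qr r) (stdB r a) * ι (Qr r) (stdB r a)) * (P r l * P r l)) := by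
          simp only [mul_assoc]
      _ = ((-1:ℝ) ^ l.length) • (-(P r l * P r l)) := by rw [iota_sq, neg_one_mul]
      _ = ((-1:ℝ) ^ (l.length + 1)) • (P r l * P r l) := by
          rw [pow_succ]; simp [smul_smul, mul_comm]
      _ = ((-1:ℝ) ^ ((a :: l).length * ((a :: l).length + 1) / 2)) • 1 := by
          rw [ih hl', smul_smul, ← pow_add]
          congr 2
          have : (a :: l).length = l.length + 1 := rfl
          rw [this]
          obtain ⟨k, hk⟩ := Nat.even_mul_succ_self l.length
          have hm : (l.length+1)*(l.length+1+1) = l.length*(l.length+1) + 2*(l.length+1) := by ring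
          omega


private lemma vol_eq_P : vol r = P r (List.finRange r) := rfl

lemma vol_sq (hr : r % 4 = 3) : vol r * vol r = 1 := by
  rw [vol_eq_P, sq_P _ (List.nodup_finRange r), List.length_finRange]
  obtain ⟨k, rfl⟩ : ∃ k, r = 4 * k + 3 := ⟨r / 4, by omega⟩
  have hm : (4*k+3) * (4*k+3+1) = 2 * (2*((4*k+3)*(k+1))) := by ring
  have h2 : (4*k+3) * (4*k+3+1) / 2 = 2*((4*k+3)*(k+1)) := by omega
  rw [h2, pow_mul, neg_one_sq, one_pow, one_smul]

lemma comm_vol_basis (hr : r % 4 = 3) (j : Fin r) :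
    ι (Qr r) (stdB r j) * vol r = vol r * ι (Qr r) (stdB r j) := by
  rw [vol_eq_P, comm_basis j]
  have h1 : ((List.finRange r).map fun i => if i = j then (1:ℝ) else -1).prod
      = ∏ i : Fin r, (if i = j then (1:ℝ) else -1) := (Fin.prod_univ_def _).symm
  rw [h1, ← Finset.mul_prod_erase Finset.univ _ (Finset.mem_univ j), if_pos rfl, one_mul]
  rw [Finset.prod_congr rfl (fun i hi => if_neg (Finset.ne_of_mem_erase hi))]
  rw [Finset.prod_const, Finset.card_erase_of_mem (Finset.mem_univ j), Finset.card_univ,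
    Fintype.card_fin]
  have : Even (r - 1) := ⟨(r-1)/2, by omega⟩
  rw [this.neg_one_pow, one_smul]

lemma comm_vol (hr : r % 4 = 3) (v : EuclideanSpace ℝ (Fin r)) :
    ι (Qr r) v * vol r = vol r * ι (Qr r) v := by
  have h : (LinearMap.mulRight ℝ (vol r)).comp (ι (Qr r))
      = (LinearMap.mulLeft ℝ (vol r)).comp (ι (Qr r)) := by
    apply Module.Basis.ext (EuclideanSpace.basisFun (Fin r) ℝ).toBasis
    intro i
    simp only [LinearMap.comp_apply, LinearMap.mulRight_apply, LinearMap.mulLeft_apply,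
      OrthonormalBasis.coe_toBasis, EuclideanSpace.basisFun_apply]
    simpa [stdB] using comm_vol_basis hr i
  simpa using LinearMap.congr_fun h v

lemma P_mem (l : List (Fin r)) : P r l ∈ evenOdd (Qr r) (l.length : ZMod 2) := by
  induction l with
  | nil =>
    simp only [P, List.map_nil, List.prod_nil, List.length_nil, Nat.cast_zero]
    exact SetLike.one_mem_graded _
  | cons a l ih =>
    have : ((a :: l).length : ZMod 2) = 1 + (l.length : ZMod 2) := by
      simp [add_comm]
    rw [P, List.map_cons, List.prod_cons, this]
    exact SetLike.mul_mem_graded (ι_mem_evenOdd_one _ _) ih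

lemma vol_mem (hr : r % 4 = 3) : vol r ∈ evenOdd (Qr r) 1 := by
  have := P_mem (r := r) (List.finRange r)
  rw [List.length_finRange] at this
  have h2 : (r : ZMod 2) = 1 := by
    rw [← ZMod.natCast_mod, show r % 2 = 1 by omega, Nat.cast_one]
  rwa [h2] at this

lemma vol_mul_even (hr : r % 4 = 3) (v : EuclideanSpace ℝ (Fin r)) :
    vol r * ι (Qr r) v ∈ CliffordAlgebra.even (Qr r) := by
  have := SetLike.mul_mem_graded (vol_mem hr) (ι_mem_evenOdd_one (Qr r) v)
  have h : (1 + 1 : ZMod 2) = 0 := rfl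
  rw [h] at this
  exact this


end Aux

/-- For `r ≡ 3 (mod 4)` there is a unital `ℝ`-algebra homomorphism
`F : Cl(Q_r) → Cl(Q_r)` with `F(ι(v)) = ω·ι(v)` for all `v`, whose image lies in the
even subalgebra `Cl⁰(Q_r)`. -/
theorem statement9 {r : ℕ} (hr : r % 4 = 3) :
    ∃ F : CliffordAlgebra (Qr r) →ₐ[ℝ] CliffordAlgebra (Qr r),
      (∀ v : EuclideanSpace ℝ (Fin r), F (ι (Qr r) v) = vol r * ι (Qr r) v) ∧
      (∀ x : CliffordAlgebra (Qr r), F x ∈ CliffordAlgebra.even (Qr r)) := by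
  have hf : ∀ v, ((LinearMap.mulLeft ℝ (vol r)).comp (ι (Qr r))) v
      * ((LinearMap.mulLeft ℝ (vol r)).comp (ι (Qr r))) v
      = algebraMap ℝ (CliffordAlgebra (Qr r)) (Qr r v) := by
    intro v
    simp only [LinearMap.comp_apply, LinearMap.mulLeft_apply]
    calc vol r * ι (Qr r) v * (vol r * ι (Qr r) v)
        = vol r * (ι (Qr r) v * vol r) * ι (Qr r) v := by simp only [mul_assoc]
      _ = vol r * (vol r * ι (Qr r) v) * ι (Qr r) v := by rw [comm_vol hr]
      _ = (vol r * vol r) * (ι (Qr r) v * ι (Qr r) v) := by simp only [mul_assoc]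
      _ = algebraMap ℝ _ (Qr r v) := by rw [vol_sq hr, ι_sq_scalar, one_mul]
  refine ⟨lift (Qr r) ⟨_, hf⟩, fun v => ?_, fun x => ?_⟩
  · rw [lift_ι_apply]; rfl
  · induction x using CliffordAlgebra.induction with
    | algebraMap t => rw [AlgHom.commutes]; exact Subalgebra.algebraMap_mem _ t
    | ι v => rw [lift_ι_apply]; exact vol_mul_even hr v
    | mul a b ha hb => rw [map_mul]; exact mul_mem ha hb
    | add a b ha hb => rw [map_add]; exact add_mem ha hb
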